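/- Let t_n denote the number of independent dominating sets of the chain triangular cactus T_n. Then for every n ≥ 1, t_n equals the Fibonacci number F_{n+3} (with F_0 = 0, F_1 = 1). -/
import Mathlib

def ncF (m : ℕ) : Finset (Finset ℕ) :=
  (Finset.range m).powerset.filter (fun A => ∀ i ∈ A, i + 1 ∉ A)

lemma mem_ncF {m : ℕ} {A : Finset ℕ} :
    A ∈ ncF m ↔ (∀ i ∈ A, i < m) ∧ ∀ i ∈ A, i + 1 ∉ A := by
  simp [ncF, Finset.subset_iff, Finset.mem_range]

lemma ncF_split (m : ℕ) :
    ncF (m + 2) = ncF (m + 1) ∪ (ncF m).image (insert (m + 1)) := by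
  ext A
  simp only [Finset.mem_union, Finset.mem_image, mem_ncF]
  constructor
  · rintro ⟨hb, hc⟩
    by_cases hm : m + 1 ∈ A
    · refine Or.inr ⟨A.erase (m + 1), ⟨⟨?_, ?_⟩, ?_⟩⟩
      · intro i hi
        have h1 := Finset.mem_of_mem_erase hi
        have h2 := Finset.ne_of_mem_erase hi
        have h3 := hb i h1
        rcases Nat.lt_or_ge i m with h | h
        · exact h
        · exfalso
          have : i = m := by omega
          subst this
          exact hc i h1 hm
      · intro i hi
        intro hcon
        exact hc i (Finset.mem_of_mem_erase hi) (Finset.mem_of_mem_erase hcon)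
      · exact Finset.insert_erase hm
    · refine Or.inl ⟨?_, hc⟩
      intro i hi
      have := hb i hi
      have : i ≠ m + 1 := fun h => hm (h ▸ hi)
      omega
  · rintro (⟨hb, hc⟩ | ⟨B, ⟨hb, hc⟩, rfl⟩)
    · exact ⟨fun i hi => by have := hb i hi; omega, hc⟩
    · constructor
      · intro i hi
        rcases Finset.mem_insert.mp hi with rfl | hi
        · omega
        · have := hb i hi; omega
      · intro i hi hcon
        rcases Finset.mem_insert.mp hi with rfl | hi
        · rcases Finset.mem_insert.mp hcon with h | h
          · omega
          · have := hb _ h; omega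
        · rcases Finset.mem_insert.mp hcon with h | h
          · have := hb i hi; omega
          · exact hc i hi h

lemma ncF_card_rec (m : ℕ) :
    (ncF (m + 2)).card = (ncF (m + 1)).card + (ncF m).card := by
  rw [ncF_split, Finset.card_union_of_disjoint, Finset.card_image_of_injOn]
  · intro A hA B hB h
    have hA' : m + 1 ∉ A := fun hc => by have := (mem_ncF.mp hA).1 _ hc; omega
    have hB' : m + 1 ∉ B := fun hc => by have := (mem_ncF.mp hB).1 _ hc; omega
    have := congrArg (fun s => Finset.erase s (m + 1)) h
    simpa [Finset.erase_insert hA', Finset.erase_insert hB'] using this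
  · rw [Finset.disjoint_right]
    rintro A hA hA'
    simp only [Finset.mem_image] at hA
    obtain ⟨B, _, rfl⟩ := hA
    have := (mem_ncF.mp hA').1 (m + 1) (Finset.mem_insert_self _ _)
    omega

lemma ncF_card (m : ℕ) : (ncF m).card = Nat.fib (m + 2) := by
  induction m using Nat.strong_induction_on with
  | _ m ih =>
    match m with
    | 0 => decide
    | 1 => decide
    | (k + 2) =>
      rw [ncF_card_rec, ih (k + 1) (by omega), ih k (by omega)]
      have h := Nat.fib_add_two (n := k + 2)
      simp only [show k + 1 + 2 = k + 3 from rfl, show k + 2 + 2 = k + 4 from rfl,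
        show k + 2 + 1 = k + 3 from rfl] at h ⊢
      omega




/-- `S` is an independent dominating set of `G`: pairwise non-adjacent, and every
vertex outside `S` has a neighbour in `S`. -/
def IsIndepDomSet {V : Type*} (G : SimpleGraph V) (S : Finset V) : Prop :=
  (∀ v ∈ S, ∀ w ∈ S, ¬ G.Adj v w) ∧ ∀ v, v ∉ S → ∃ w ∈ S, G.Adj v w

/-- The chain triangular cactus `T n`: vertices `Sum.inl i` are `x i`
(`0 ≤ i ≤ n`) and `Sum.inr k` is `y (k+1)` (`0 ≤ k ≤ n-1`); the `i`-th triangle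
(`1 ≤ i ≤ n`) has vertices `x (i-1)`, `x i`, `y i`. -/
def triChain (n : ℕ) : SimpleGraph (Fin (n + 1) ⊕ Fin n) :=
  SimpleGraph.fromRel fun p q =>
    match p, q with
    | Sum.inl i, Sum.inl j => (i : ℕ) + 1 = (j : ℕ)
    | Sum.inl i, Sum.inr k => (i : ℕ) = (k : ℕ) ∨ (i : ℕ) = (k : ℕ) + 1
    | _, _ => False

/-- The number of independent dominating sets of the chain triangular cactus `T n`. -/
noncomputable def numIDSTri (n : ℕ) : ℕ :=
  Nat.card {S : Finset (Fin (n + 1) ⊕ Fin n) // IsIndepDomSet (triChain n) S}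

/-- For every `n ≥ 1`, the number of independent dominating sets of the chain
triangular cactus `T n` equals the Fibonacci number `F (n+3)`. -/
lemma triChain_adj_ll {n : ℕ} {i j : Fin (n + 1)} :
    (triChain n).Adj (Sum.inl i) (Sum.inl j) ↔ ((i : ℕ) + 1 = j ∨ (j : ℕ) + 1 = i) := by
  simp only [triChain, SimpleGraph.fromRel_adj, ne_eq, Sum.inl.injEq]
  constructor
  · rintro ⟨-, h⟩; exact h
  · rintro h
    refine ⟨fun hij => ?_, h⟩
    subst hij
    omega

lemma triChain_adj_lr {n : ℕ} {i : Fin (n + 1)} {k : Fin n} :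
    (triChain n).Adj (Sum.inl i) (Sum.inr k) ↔ ((i : ℕ) = k ∨ (i : ℕ) = (k : ℕ) + 1) := by
  simp [triChain, SimpleGraph.fromRel_adj]

lemma triChain_adj_rr {n : ℕ} {k l : Fin n} :
    ¬ (triChain n).Adj (Sum.inr k) (Sum.inr l) := by
  simp [triChain, SimpleGraph.fromRel_adj]

lemma isIndepDomSet_iff (n : ℕ) (hn : 1 ≤ n) (S : Finset (Fin (n + 1) ⊕ Fin n)) :
    IsIndepDomSet (triChain n) S ↔
      ((∀ i j : Fin (n + 1), Sum.inl i ∈ S → Sum.inl j ∈ S → (i : ℕ) + 1 ≠ (j : ℕ)) ∧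
       (∀ k : Fin n, Sum.inr k ∈ S ↔
          (Sum.inl k.castSucc ∉ S ∧ Sum.inl k.succ ∉ S))) := by
  constructor
  · rintro ⟨hind, hdom⟩
    constructor
    · intro i j hi hj h
      exact hind _ hi _ hj (triChain_adj_ll.mpr (Or.inl h))
    · intro k
      constructor
      · intro hk
        constructor
        · intro hc
          exact hind _ hc _ hk (triChain_adj_lr.mpr (Or.inl (by simp)))
        · intro hc
          exact hind _ hc _ hk (triChain_adj_lr.mpr (Or.inr (by simp)))
      · rintro ⟨h1, h2⟩
        by_contra hk
        obtain ⟨w, hw, hadj⟩ := hdom _ hk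
        match w with
        | Sum.inl i =>
          rcases triChain_adj_lr.mp hadj.symm with h | h
          · exact h1 (by rwa [show k.castSucc = i from Fin.ext (by simpa using h.symm)])
          · exact h2 (by rwa [show k.succ = i from Fin.ext (by simpa using h.symm)])
        | Sum.inr l => exact triChain_adj_rr hadj
  · rintro ⟨hc, hy⟩
    constructor
    · rintro v hv w hw hadj
      match v, w with
      | Sum.inl i, Sum.inl j =>
        rcases triChain_adj_ll.mp hadj with h | h
        · exact hc _ _ hv hw h
        · exact hc _ _ hw hv h
      | Sum.inl i, Sum.inr k =>
        obtain ⟨h1, h2⟩ := (hy k).mp hw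
        rcases triChain_adj_lr.mp hadj with h | h
        · exact h1 (by rwa [show k.castSucc = i from Fin.ext (by simpa using h.symm)])
        · exact h2 (by rwa [show k.succ = i from Fin.ext (by simpa using h.symm)])
      | Sum.inr k, Sum.inl i =>
        obtain ⟨h1, h2⟩ := (hy k).mp hv
        rcases triChain_adj_lr.mp hadj.symm with h | h
        · exact h1 (by rwa [show k.castSucc = i from Fin.ext (by simpa using h.symm)])
        · exact h2 (by rwa [show k.succ = i from Fin.ext (by simpa using h.symm)])
      | Sum.inr k, Sum.inr l => exact triChain_adj_rr hadj
    · rintro v hv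
      match v with
      | Sum.inr k =>
        have := (hy k).not.mp hv
        push_neg at this
        rcases Classical.em (Sum.inl k.castSucc ∈ S) with h | h
        · exact ⟨_, h, (triChain_adj_lr.mpr (Or.inl (by simp))).symm⟩
        · exact ⟨_, this h, (triChain_adj_lr.mpr (Or.inr (by simp))).symm⟩
      | Sum.inl i =>
        by_cases hi : (i : ℕ) < n
        · set k : Fin n := ⟨i, hi⟩ with hk
          by_cases hks : Sum.inr k ∈ S
          · exact ⟨_, hks, triChain_adj_lr.mpr (Or.inl rfl)⟩
          · have h := (hy k).not.mp hks
            push_neg at h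
            have hcs : k.castSucc = i := Fin.ext rfl
            have h2 : Sum.inl k.succ ∈ S := h (by rwa [hcs])
            exact ⟨_, h2, triChain_adj_ll.mpr (Or.inl (by simp [hk]))⟩
        · have hi' : (i : ℕ) = n := by omega
          set k : Fin n := ⟨n - 1, by omega⟩ with hk
          have e1 : (k : ℕ) = n - 1 := rfl
          have hsv : (k.succ : ℕ) = (i : ℕ) := by rw [Fin.val_succ, e1]; omega
          by_cases hks : Sum.inr k ∈ S
          · exact ⟨_, hks, triChain_adj_lr.mpr (Or.inr (by rw [e1]; omega))⟩
          · have h := (hy k).not.mp hks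
            push_neg at h
            have h2 : Sum.inl k.castSucc ∈ S := by
              by_contra hc2
              exact hv (by rw [← show k.succ = i from Fin.ext hsv]; exact h hc2)
            refine ⟨_, h2, triChain_adj_ll.mpr (Or.inr ?_)⟩
            rw [Fin.coe_castSucc, e1]
            omega

theorem numIDSTri_eq_fib (n : ℕ) (hn : 1 ≤ n) :
    numIDSTri n = Nat.fib (n + 3) := by
  classical
  have e1 : {S : Finset (Fin (n + 1) ⊕ Fin n) // IsIndepDomSet (triChain n) S} ≃
      {A : Finset (Fin (n + 1)) // ∀ i ∈ A, ∀ j ∈ A, (i : ℕ) + 1 ≠ (j : ℕ)} := by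
    refine ⟨fun S => ⟨Finset.univ.filter (fun i => Sum.inl i ∈ S.1), ?_⟩,
        fun A => ⟨Finset.univ.filter (fun p =>
          Sum.elim (fun i => i ∈ A.1)
            (fun k : Fin n => k.castSucc ∉ A.1 ∧ k.succ ∉ A.1) p), ?_⟩, ?_, ?_⟩
    · intro i hi j hj
      simp only [Finset.mem_filter, Finset.mem_univ, true_and] at hi hj
      exact ((isIndepDomSet_iff n hn S.1).mp S.2).1 i j hi hj
    · rw [isIndepDomSet_iff n hn]
      constructor
      · intro i j hi hj
        simp only [Finset.mem_filter, Finset.mem_univ, true_and, Sum.elim_inl] at hi hj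
        exact A.2 i hi j hj
      · intro k
        simp only [Finset.mem_filter, Finset.mem_univ, true_and, Sum.elim_inl, Sum.elim_inr]
    · intro S
      apply Subtype.ext
      ext p
      match p with
      | Sum.inl i =>
        simp only [Finset.mem_filter, Finset.mem_univ, true_and, Sum.elim_inl]
      | Sum.inr k =>
        simp only [Finset.mem_filter, Finset.mem_univ, true_and, Sum.elim_inr]
        exact (((isIndepDomSet_iff n hn S.1).mp S.2).2 k).symm
    · intro A
      apply Subtype.ext
      ext i
      simp only [Finset.mem_filter, Finset.mem_univ, true_and, Sum.elim_inl]
  have e2 : {A : Finset (Fin (n + 1)) // ∀ i ∈ A, ∀ j ∈ A, (i : ℕ) + 1 ≠ (j : ℕ)} ≃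
      {B : Finset ℕ // B ∈ ncF (n + 1)} := by
    refine ⟨fun A => ⟨A.1.image Fin.val, ?_⟩,
        fun B => ⟨Finset.univ.filter (fun i : Fin (n + 1) => (i : ℕ) ∈ B.1), ?_⟩, ?_, ?_⟩
    · rw [mem_ncF]
      constructor
      · intro x hx
        simp only [Finset.mem_image] at hx
        obtain ⟨a, _, rfl⟩ := hx
        exact a.isLt
      · intro x hx hx'
        simp only [Finset.mem_image] at hx hx'
        obtain ⟨a, ha, rfl⟩ := hx
        obtain ⟨b, hb, hab⟩ := hx'
        exact A.2 a ha b hb hab.symm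
    · intro i hi j hj
      simp only [Finset.mem_filter, Finset.mem_univ, true_and] at hi hj
      exact fun hc => (mem_ncF.mp B.2).2 (i : ℕ) hi (hc ▸ hj)
    · intro A
      apply Subtype.ext
      ext i
      simp only [Finset.mem_filter, Finset.mem_univ, true_and, Finset.mem_image]
      constructor
      · rintro ⟨a, ha, hai⟩
        rwa [← Fin.ext hai]
      · intro hi
        exact ⟨i, hi, rfl⟩
    · intro B
      apply Subtype.ext
      ext x
      simp only [Finset.mem_image, Finset.mem_filter, Finset.mem_univ, true_and]
      constructor
      · rintro ⟨a, ha, rfl⟩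
        exact ha
      · intro hx
        exact ⟨⟨x, (mem_ncF.mp B.2).1 x hx⟩, hx, rfl⟩
  unfold numIDSTri
  rw [Nat.card_congr e1, Nat.card_congr e2]
  have hcard : Nat.card {B : Finset ℕ // B ∈ ncF (n + 1)} = (ncF (n + 1)).card := by
    exact Nat.card_eq_finsetCard _
  rw [hcard, ncF_card]
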